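/- arXiv:2204.11149 — 6 statements merged into one kernel-verified Lean document; each statement's English description precedes it below -/
import Mathlib

section
/- Let f be a non-negative submodular function and O a maximizer of f over sets of size at most k (with |O| ≤ k). If R is a random subset of O in which every element of O appears with probability at least p (not necessarily independently), then E[f(R)] ≥ p·f(O). -/
open Finset

section Aux

variable {E : Type*} [DecidableEq E]

/-- Weighted chain sum: sum over the list of `w x` times the marginal value of
`x` relative to the growing prefix starting at `P`. -/
noncomputable def wsum (f : Finset E → ℝ) (w : E → ℝ) : Finset E → List E → ℝ
  | _, [] => 0
  | P, x :: L => w x * (f (insert x P) - f P) + wsum f w (insert x P) L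

lemma wsum_congr (f : Finset E → ℝ) (w w' : E → ℝ) (P : Finset E) (L : List E)
    (h : ∀ x ∈ L, w x = w' x) : wsum f w P L = wsum f w' P L := by
  induction L generalizing P with
  | nil => rfl
  | cons x L ih =>
    simp only [wsum]
    rw [h x (by simp), ih _ (fun y hy => h y (by simp [hy]))]

lemma chain_bound (f : Finset E → ℝ)
    (hsub : ∀ A B, f (A ∪ B) + f (A ∩ B) ≤ f A + f B) :
    ∀ (L : List E), L.Nodup → ∀ (P T S : Finset E), T ⊆ P → (∀ y ∈ L, y ∉ P) →
      S ⊆ L.toFinset →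
      f T + wsum f (fun x => if x ∈ S then (1 : ℝ) else 0) P L ≤ f (T ∪ S) := by
  intro L
  induction L with
  | nil =>
    intro _ P T S hTP _ hS
    simp only [List.toFinset_nil, Finset.subset_empty] at hS
    subst hS
    simp [wsum]
  | cons x L ih =>
    intro hnd P T S hTP hP hS
    have hxL : x ∉ L := (List.nodup_cons.mp hnd).1
    have hndL : L.Nodup := (List.nodup_cons.mp hnd).2
    have hxP : x ∉ P := hP x (by simp)
    by_cases hx : x ∈ S
    · -- key submodularity step
      have hkey : f (insert x P) + f T ≤ f (insert x T) + f P := by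
        have h1 : insert x T ∪ P = insert x P := by
          rw [Finset.insert_union, Finset.union_eq_right.mpr hTP]
        have h2 : insert x T ∩ P = T := by
          rw [Finset.insert_inter_of_notMem hxP, Finset.inter_eq_left.mpr hTP]
        have := hsub (insert x T) P
        rw [h1, h2] at this
        linarith
      have hS' : S.erase x ⊆ L.toFinset := by
        intro y hy
        have hyx : y ≠ x := (Finset.mem_erase.mp hy).1
        have : y ∈ L.toFinset ∨ y = x := by
          have := hS (Finset.mem_erase.mp hy).2
          simp only [List.toFinset_cons, Finset.mem_insert] at this
          tauto
        tauto
      have hIH := ih hndL (insert x P) (insert x T) (S.erase x)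
        (Finset.insert_subset_insert _ hTP)
        (fun y hy => by
          simp only [Finset.mem_insert, not_or]
          exact ⟨fun h => hxL (h ▸ hy), hP y (by simp [hy])⟩)
        hS'
      have hw : wsum f (fun y => if y ∈ S.erase x then (1 : ℝ) else 0) (insert x P) L
          = wsum f (fun y => if y ∈ S then (1 : ℝ) else 0) (insert x P) L := by
        apply wsum_congr
        intro y hy
        have : y ≠ x := fun h => hxL (h ▸ hy)
        simp [Finset.mem_erase, this]
      have hTS : insert x T ∪ S.erase x = T ∪ S := by
        rw [Finset.insert_union, ← Finset.union_insert, Finset.insert_erase hx]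
      rw [hw, hTS] at hIH
      simp only [wsum, hx, if_true]
      linarith
    · have hSL : S ⊆ L.toFinset := by
        intro y hy
        have := hS hy
        simp only [List.toFinset_cons, Finset.mem_insert] at this
        rcases this with h | h
        · exact absurd (h ▸ hy) hx
        · exact h
      have hIH := ih hndL (insert x P) T S
        (hTP.trans (Finset.subset_insert _ _))
        (fun y hy => by
          simp only [Finset.mem_insert, not_or]
          exact ⟨fun h => hxL (h ▸ hy), hP y (by simp [hy])⟩)
        hSL
      simp only [wsum, hx, if_false]
      linarith

lemma wsum_expect {Ω : Type*} [Fintype Ω] (f : Finset E → ℝ) (μ : Ω → ℝ)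
    (R : Ω → Finset E) :
    ∀ (L : List E) (P : Finset E),
      ∑ ω, μ ω * wsum f (fun x => if x ∈ R ω then (1 : ℝ) else 0) P L
        = wsum f (fun x => ∑ ω, if x ∈ R ω then μ ω else 0) P L := by
  intro L
  induction L with
  | nil => intro P; simp [wsum]
  | cons x L ih =>
    intro P
    simp only [wsum, mul_add]
    rw [Finset.sum_add_distrib, ih]
    congr 1
    rw [Finset.sum_mul]
    apply Finset.sum_congr rfl
    intro ω _
    by_cases h : x ∈ R ω <;> simp [h]

lemma wsum_abel (f : Finset E → ℝ) (hnn : ∀ S, 0 ≤ f S) (q : E → ℝ) (p : ℝ) :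
    ∀ (L : List E), L.Pairwise (fun a b => q b ≤ q a) → (∀ x ∈ L, p ≤ q x ∧ q x ≤ 1) →
    ∀ (P : Finset E) (c : ℝ), p ≤ c → (∀ x ∈ L, q x ≤ c) →
      p * f (P ∪ L.toFinset) - c * f P ≤ wsum f q P L := by
  intro L
  induction L with
  | nil =>
    intro _ _ P c hpc _
    simp only [List.toFinset_nil, Finset.union_empty, wsum]
    nlinarith [hnn P]
  | cons x L ih =>
    intro hsort hbd P c hpc hc
    have hIH := ih (List.pairwise_cons.mp hsort).2
      (fun y hy => hbd y (by simp [hy]))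
      (insert x P) (q x) (hbd x (by simp)).1
      (fun y hy => (List.pairwise_cons.mp hsort).1 y hy)
    have hPU : insert x P ∪ L.toFinset = P ∪ (x :: L).toFinset := by
      rw [List.toFinset_cons, Finset.insert_union, Finset.union_insert]
    rw [hPU] at hIH
    have hqc : q x * f P ≤ c * f P :=
      mul_le_mul_of_nonneg_right (hc x (by simp)) (hnn P)
    simp only [wsum]
    linarith

end Aux

/-- Sampling lemma: if `O` maximizes a non-negative submodular `f` over sets of
size at most `k` and `R` is a random subset of `O` containing each element of
`O` with probability at least `p`, then `E[f(R)] ≥ p·f(O)`. -/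
theorem stmt6 {E : Type*} [DecidableEq E] {Ω : Type*} [Fintype Ω]
    (f : Finset E → ℝ)
    (hnn : ∀ S, 0 ≤ f S)
    (hsub : ∀ A B, f (A ∪ B) + f (A ∩ B) ≤ f A + f B)
    (k : ℕ) (O : Finset E) (hOcard : O.card ≤ k)
    (hOopt : ∀ X : Finset E, X.card ≤ k → f X ≤ f O)
    (μ : Ω → ℝ) (hμnn : ∀ ω, 0 ≤ μ ω) (hμ1 : ∑ ω, μ ω = 1)
    (R : Ω → Finset E) (hR : ∀ ω, R ω ⊆ O)
    (p : ℝ) (hp0 : 0 ≤ p) (hp1 : p ≤ 1)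
    (hprob : ∀ x ∈ O, p ≤ ∑ ω, if x ∈ R ω then μ ω else 0) :
    p * f O ≤ ∑ ω, μ ω * f (R ω) := by
  classical
  set q : E → ℝ := fun x => ∑ ω, if x ∈ R ω then μ ω else 0 with hq
  -- sort the elements of O in decreasing order of q
  set L : List E := O.toList.mergeSort (fun a b => decide (q b ≤ q a)) with hL
  have hperm : List.Perm L O.toList := List.mergeSort_perm O.toList _
  have hnd : L.Nodup := hperm.nodup_iff.mpr O.nodup_toList
  have htf : L.toFinset = O := by
    ext x
    simp [List.mem_toFinset, hperm.mem_iff, Finset.mem_toList]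
  have hsort : L.Pairwise (fun a b => q b ≤ q a) := by
    have := List.pairwise_mergeSort (le := fun a b => decide (q b ≤ q a))
      (fun a b c h₁ h₂ => by
        simp only [decide_eq_true_eq] at *
        exact le_trans h₂ h₁)
      (fun a b => by simpa using le_total (q b) (q a))
      O.toList
    rw [← hL] at this
    exact this.imp (fun h => by simpa using h)
  have hmemL : ∀ x ∈ L, x ∈ O := fun x hx => htf ▸ List.mem_toFinset.mpr hx
  have hq1 : ∀ x, q x ≤ 1 := by
    intro x
    rw [← hμ1]
    apply Finset.sum_le_sum
    intro ω _
    split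
    · exact le_refl _
    · exact hμnn ω
  -- pointwise chain bound
  have hchain : ∀ ω, f ∅ + wsum f (fun x => if x ∈ R ω then (1 : ℝ) else 0) ∅ L
      ≤ f (R ω) := by
    intro ω
    have := chain_bound f hsub L hnd ∅ ∅ (R ω) (Finset.Subset.refl _)
      (fun y _ => Finset.notMem_empty y) (htf ▸ hR ω)
    rwa [Finset.empty_union] at this
  -- take expectations
  have hexp : f ∅ + wsum f q ∅ L ≤ ∑ ω, μ ω * f (R ω) := by
    have h1 : ∀ ω, μ ω * (f ∅ + wsum f (fun x => if x ∈ R ω then (1 : ℝ) else 0) ∅ L)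
        ≤ μ ω * f (R ω) := fun ω =>
      mul_le_mul_of_nonneg_left (hchain ω) (hμnn ω)
    calc f ∅ + wsum f q ∅ L
        = ∑ ω, μ ω * (f ∅ + wsum f (fun x => if x ∈ R ω then (1 : ℝ) else 0) ∅ L) := by
          simp only [mul_add]
          rw [Finset.sum_add_distrib, ← Finset.sum_mul, hμ1, one_mul,
            wsum_expect f μ R L ∅]
      _ ≤ ∑ ω, μ ω * f (R ω) := Finset.sum_le_sum (fun ω _ => h1 ω)
  -- Abel-type lower bound
  have habel : p * f O - f ∅ ≤ wsum f q ∅ L := by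
    have := wsum_abel f hnn q p L hsort
      (fun x hx => ⟨hprob x (hmemL x hx), hq1 x⟩) ∅ 1 hp1
      (fun x _ => hq1 x)
    rwa [Finset.empty_union, htf, one_mul] at this
  linarith
end

section
/- Let f be a monotone non-negative submodular function on E. There exists a non-negative symmetric submodular function g on E, defined by g(X) = f(X) + f(E \ X) − f(E), such that if f has the property that f(X) = f(E) for every X with |X| ≥ 4k, and |E| ≥ 5k, then g(X) = f(X) for every X with |X| ≤ k. In particular, g is symmetric, submodular, and non-negative, and maximizing g under cardinality constraint k is equivalent to maximizing f. -/
open Finset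

/-- The symmetrization `g(X) = f(X) + f(E \ X) − f(E)` of a monotone
non-negative submodular `f` is symmetric, submodular and non-negative, and if
`f(X) = f(E)` whenever `|X| ≥ 4k` and `|E| ≥ 5k`, then `g(X) = f(X)` for all
`|X| ≤ k`. -/
theorem stmt7 {E : Type*} [Fintype E] [DecidableEq E] (f : Finset E → ℝ)
    (hnn : ∀ S, 0 ≤ f S)
    (hmono : ∀ S T : Finset E, S ⊆ T → f S ≤ f T)
    (hsub : ∀ A B, f (A ∪ B) + f (A ∩ B) ≤ f A + f B)
    (k : ℕ)
    (hstar : ∀ X : Finset E, 4 * k ≤ X.card → f X = f univ)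
    (hcard : 5 * k ≤ Fintype.card E) :
    ∃ g : Finset E → ℝ,
      (∀ X, g X = f X + f (univ \ X) - f univ) ∧
      (∀ X, g X = g (univ \ X)) ∧
      (∀ A B, g (A ∪ B) + g (A ∩ B) ≤ g A + g B) ∧
      (∀ X, 0 ≤ g X) ∧
      (∀ X : Finset E, X.card ≤ k → g X = f X) := by
  refine ⟨fun X => f X + f (univ \ X) - f univ, fun _ => rfl, ?_, ?_, ?_, ?_⟩
  · intro X
    simp only [sdiff_sdiff_self_left, univ_inter]
    ring
  · intro A B
    have h1 := hsub A B
    have h2 := hsub (univ \ A) (univ \ B)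
    have e1 : univ \ A ∪ (univ \ B) = univ \ (A ∩ B) := (sdiff_inter_distrib_right _ _ _).symm
    have e2 : (univ \ A) ∩ (univ \ B) = univ \ (A ∪ B) := by
      rw [sdiff_union_distrib]
    rw [e1, e2] at h2
    dsimp only
    linarith
  · intro X
    have h := hsub X (univ \ X)
    have e1 : X ∪ (univ \ X) = univ := by
      simp [union_sdiff_of_subset (subset_univ X)]
    have e2 : X ∩ (univ \ X) = ∅ := by
      simp [inter_sdiff_self]
    rw [e1, e2] at h
    have := hnn (∅ : Finset E)
    dsimp only
    linarith
  · intro X hX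
    have hc : 4 * k ≤ (univ \ X).card := by
      rw [card_sdiff_of_subset (subset_univ X), card_univ]
      omega
    dsimp only
    rw [hstar _ hc]
    ring
end

section
/- Greedy exchange inequality: Let f be submodular, O_H ⊆ E, and let X = {x₁,…,x_m} be built greedily so that each xⱼ maximizes f(x | O_H ∪ X⁽ʲ⁻¹⁾) over available elements, with all marginals f(xⱼ | O_H ∪ X⁽ʲ⁻¹⁾) ≥ 0, where X⁽ʲ⁾ = {x₁,…,xⱼ}. Suppose O_L⁽⁰⁾ = {o₁,…,o_r} with r ≤ m is a set of available elements, so that f(xⱼ | O_H ∪ X⁽ʲ⁻¹⁾) ≥ f(oⱼ | O_H ∪ X⁽ʲ⁻¹⁾) for all j ≤ r. Then f(X | O_H) ≥ f(O_L⁽⁰⁾ | O_H ∪ X), and consequently f(X | O_L⁽⁰⁾ ∪ O_H) ≤ 2·f(X | O_H) − f(O_L⁽⁰⁾ | O_H). -/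
open Finset

/-- Greedy exchange inequality: if `X = {x₀,…,x_{m−1}}` is built greedily on
top of `O_H` with non-negative marginals dominating those of the distinct
elements `o₀,…,o_{r−1}` (with `r ≤ m`), then
`f(X | O_H) ≥ f(O_L⁽⁰⁾ | O_H ∪ X)` and consequently
`f(X | O_L⁽⁰⁾ ∪ O_H) ≤ 2 f(X | O_H) − f(O_L⁽⁰⁾ | O_H)`. -/
theorem stmt13 {E : Type*} [DecidableEq E] (f : Finset E → ℝ)
    (hsub : ∀ A B, f (A ∪ B) + f (A ∩ B) ≤ f A + f B)
    (m r : ℕ) (hrm : r ≤ m)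
    (OH : Finset E) (x : ℕ → E) (X : ℕ → Finset E)
    (hX0 : X 0 = ∅)
    (hXsucc : ∀ j < m, X (j + 1) = insert (x j) (X j))
    (hnonneg : ∀ j < m, 0 ≤ f (OH ∪ X (j + 1)) - f (OH ∪ X j))
    (o : ℕ → E) (hoinj : Set.InjOn o (Set.Iio r))
    (OL : Finset E) (hOL : OL = (Finset.range r).image o)
    (hgreedy : ∀ j < r,
        f (insert (o j) (OH ∪ X j)) - f (OH ∪ X j) ≤
          f (OH ∪ X (j + 1)) - f (OH ∪ X j)) :
    (f (X m ∪ OH) - f OH ≥ f (OL ∪ (OH ∪ X m)) - f (OH ∪ X m)) ∧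
    (f (X m ∪ (OL ∪ OH)) - f (OL ∪ OH) ≤
      2 * (f (X m ∪ OH) - f OH) - (f (OL ∪ OH) - f OH)) := by
  -- monotonicity of the greedy sets
  have hXstep : ∀ j k, j + k ≤ m → X j ⊆ X (j + k) := by
    intro j k
    induction k with
    | zero => intro _; simp
    | succ n ih =>
      intro h
      have h' : j + n < m := by omega
      have := ih (le_of_lt h')
      calc X j ⊆ X (j + n) := this
        _ ⊆ insert (x (j + n)) (X (j + n)) := subset_insert _ _
        _ = X (j + n + 1) := (hXsucc (j + n) h').symm
  have hXmono : ∀ j ≤ m, X j ⊆ X m := by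
    intro j hj
    obtain ⟨k, hk⟩ := Nat.exists_eq_add_of_le hj
    have := hXstep j k (by omega)
    rwa [← hk] at this
  -- the augmented sets
  set S : ℕ → Finset E := fun j => (OH ∪ X m) ∪ (Finset.range j).image o with hS
  have key : ∀ j < r, f (S (j + 1)) - f (S j) ≤ f (OH ∪ X (j + 1)) - f (OH ∪ X j) := by
    intro j hj
    have hins : S (j + 1) = insert (o j) (S j) := by
      simp only [hS, Finset.range_add_one, Finset.image_insert, Finset.union_insert]
    by_cases h : o j ∈ S j
    · rw [hins, Finset.insert_eq_self.mpr h]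
      have := hnonneg j (lt_of_lt_of_le hj hrm)
      linarith
    · have hsubset : OH ∪ X j ⊆ S j := by
        apply Finset.Subset.trans _ (Finset.subset_union_left)
        exact Finset.union_subset_union_right (hXmono j (le_trans hj.le hrm))
      have h1 := hsub (insert (o j) (OH ∪ X j)) (S j)
      have hu : insert (o j) (OH ∪ X j) ∪ S j = S (j + 1) := by
        rw [hins, Finset.insert_union, Finset.union_eq_right.mpr hsubset]
      have hi : insert (o j) (OH ∪ X j) ∩ S j = OH ∪ X j := by
        rw [Finset.insert_inter_of_notMem h, Finset.inter_eq_left.mpr hsubset]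
      rw [hu, hi] at h1
      have h2 := hgreedy j hj
      linarith
  -- telescoping sums
  have t1 : ∑ j ∈ Finset.range r, (f (S (j + 1)) - f (S j)) = f (S r) - f (S 0) :=
    Finset.sum_range_sub (fun j => f (S j)) r
  have t2 : ∑ j ∈ Finset.range m, (f (OH ∪ X (j + 1)) - f (OH ∪ X j))
      = f (OH ∪ X m) - f (OH ∪ X 0) :=
    Finset.sum_range_sub (fun j => f (OH ∪ X j)) m
  have hsum1 : ∑ j ∈ Finset.range r, (f (S (j + 1)) - f (S j))
      ≤ ∑ j ∈ Finset.range r, (f (OH ∪ X (j + 1)) - f (OH ∪ X j)) := by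
    apply Finset.sum_le_sum
    intro j hj
    exact key j (Finset.mem_range.mp hj)
  have hsum2 : ∑ j ∈ Finset.range r, (f (OH ∪ X (j + 1)) - f (OH ∪ X j))
      ≤ ∑ j ∈ Finset.range m, (f (OH ∪ X (j + 1)) - f (OH ∪ X j)) := by
    apply Finset.sum_le_sum_of_subset_of_nonneg (Finset.range_subset_range.mpr hrm)
    intro j hj _
    exact hnonneg j (Finset.mem_range.mp hj)
  have hS0 : S 0 = OH ∪ X m := by simp [hS]
  have hSr : S r = OL ∪ (OH ∪ X m) := by
    rw [hOL]
    show OH ∪ X m ∪ (Finset.range r).image o = _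
    ext a
    simp only [Finset.mem_union]
    tauto
  have hcomm : f (X m ∪ OH) = f (OH ∪ X m) := by rw [Finset.union_comm]
  have part1 : f (X m ∪ OH) - f OH ≥ f (OL ∪ (OH ∪ X m)) - f (OH ∪ X m) := by
    rw [hX0, Finset.union_empty] at t2
    rw [hS0, hSr] at t1
    rw [hcomm]
    linarith
  refine ⟨part1, ?_⟩
  have hassoc : X m ∪ (OL ∪ OH) = OL ∪ (OH ∪ X m) := by
    ext a
    simp only [Finset.mem_union]
    tauto
  rw [hassoc]
  rw [hcomm] at part1 ⊢
  linarith
end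

section
/- Symmetric punchline inequality: Let f be non-negative symmetric submodular on a finite set V, and let O_H, S₂, S₃ be subsets with S₂ ⊆ S₃ and S₃ ∩ O_H = ∅. If f(O_H | S₂) = −f(O_H), then f(S₃ \ S₂ | O_H) ≥ f(S₃ \ S₂ | S₂). -/
open Finset

/-- Symmetric punchline: for a non-negative symmetric submodular `f`, if
`S₂ ⊆ S₃`, `S₃` is disjoint from `O_H`, and `f(O_H | S₂) = −f(O_H)`, then
`f(S₃ \ S₂ | O_H) ≥ f(S₃ \ S₂ | S₂)`. -/
theorem stmt14 {V : Type*} [Fintype V] [DecidableEq V] (f : Finset V → ℝ)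
    (hnn : ∀ S, 0 ≤ f S)
    (hsym : ∀ S, f S = f (univ \ S))
    (hsub : ∀ A B, f (A ∪ B) + f (A ∩ B) ≤ f A + f B)
    (OH S₂ S₃ : Finset V) (h23 : S₂ ⊆ S₃) (hdisj : Disjoint S₃ OH)
    (hhyp : f (OH ∪ S₂) - f S₂ = -f OH) :
    f ((S₃ \ S₂) ∪ OH) - f OH ≥ f ((S₃ \ S₂) ∪ S₂) - f S₂ := by
  set T := S₃ \ S₂ with hT
  have hTS : T ∪ S₂ = S₃ := sdiff_union_of_subset h23
  -- Step 1: submodularity on (T ∪ OH) and (OH ∪ S₂)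
  have hU : (T ∪ OH) ∪ (OH ∪ S₂) = S₃ ∪ OH := by
    rw [← hTS]; ext x; simp; tauto
  have hd := Finset.disjoint_left.mp hdisj
  have hI : (T ∪ OH) ∩ (OH ∪ S₂) = OH := by
    ext x
    simp only [mem_inter, mem_union, hT, mem_sdiff]
    constructor
    · rintro ⟨h1 | h1, h2 | h2⟩ <;> first | assumption | tauto | exact absurd h2 (hd h1.1)
    · tauto
  have step1 := hsub (T ∪ OH) (OH ∪ S₂)
  rw [hU, hI] at step1
  -- Step 2: f(S₃ ∪ OH) ≥ f(S₃) - f(OH), using symmetry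
  have hU2 : (OH ∪ S₃) ∪ (univ \ OH) = univ := by
    ext x; simp; tauto
  have hI2 : (OH ∪ S₃) ∩ (univ \ OH) = S₃ := by
    ext x; simp only [mem_inter, mem_union, mem_sdiff, mem_univ, true_and]
    constructor
    · rintro ⟨h1 | h1, h2⟩ <;> tauto
    · intro h; exact ⟨Or.inr h, hd h⟩
  have step2 := hsub (OH ∪ S₃) (univ \ OH)
  rw [hU2, hI2, ← hsym OH] at step2
  have hsUO : S₃ ∪ OH = OH ∪ S₃ := union_comm _ _
  have hempty : f univ = f ∅ := by rw [hsym ∅, sdiff_empty]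
  have h0 : 0 ≤ f univ := hnn univ
  rw [hTS]
  rw [hsUO] at step1
  linarith
end

section
/- Factor-revealing bound (second program of Theorem 5.2): Let a, b, c, d, α ∈ ℝ satisfy: a + 2b = 1, 2α ≥ 1 − c, 1 − c − b ≤ 0, a + b ≥ c, a + b ≤ 0.9, a ≤ c, 0 ≤ b ≤ 0.9, 0 ≤ c ≤ 0.9, 0 ≤ α ≤ 1. Then max{b, a + b, α + c} ≥ 0.6. -/
/-- Factor-revealing bound (second program of Theorem 5.2). -/
theorem stmt17 (a b c d α : ℝ)
    (h1 : a + 2 * b = 1) (h2 : 2 * α ≥ 1 - c) (h3 : 1 - c - b ≤ 0)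
    (h4 : a + b ≥ c) (h5 : a + b ≤ 0.9) (h6 : a ≤ c)
    (h7 : 0 ≤ b) (h8 : b ≤ 0.9) (h9 : 0 ≤ c) (h10 : c ≤ 0.9)
    (h11 : 0 ≤ α) (h12 : α ≤ 1) :
    max b (max (a + b) (α + c)) ≥ 0.6 := by
  rcases le_or_gt 0.6 b with h | h
  · exact le_max_of_le_left h
  rcases le_or_gt 0.6 (a+b) with h' | h'
  · exact le_max_of_le_right (le_max_left _ _ |>.trans' h')
  refine le_max_of_le_right (le_max_of_le_right ?_)
  linarith
end

section
/- Factor-revealing infeasibility (second program of Theorem 6.4): There do not exist real numbers a, b, c, d satisfying all of: 1 − a − 2b ≥ 0; 1 − c − b ≤ 0; a + 2b ≥ 1; a + b ≥ c; a + b ≤ 0.5029; c + d ≤ 0.5029; a ≤ c; 0 ≤ b ≤ 0.5029; 0 ≤ c ≤ 0.9; 0 ≤ d; b ≤ 0.5029; (2 − 1/e)·(1 − a − b − d) − d − a ≤ 0.5029, where e is Euler's number. -/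
/-- Factor-revealing infeasibility (second program of Theorem 6.4). -/
theorem stmt19 :
    ¬ ∃ a b c d : ℝ,
      1 - a - 2 * b ≥ 0 ∧
      1 - c - b ≤ 0 ∧
      a + 2 * b ≥ 1 ∧
      a + b ≥ c ∧
      a + b ≤ 0.5029 ∧
      c + d ≤ 0.5029 ∧
      a ≤ c ∧
      0 ≤ b ∧ b ≤ 0.5029 ∧
      0 ≤ c ∧ c ≤ 0.9 ∧
      0 ≤ d ∧
      (2 - 1 / Real.exp 1) * (1 - a - b - d) - d - a ≤ 0.5029 := by
  rintro ⟨a, b, c, d, h1, h2, h3, h4, h5, h6, h7, hb0, hb1, hc0, hc1, hd0, hF⟩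
  have he : (2.7182818283 : ℝ) < Real.exp 1 := Real.exp_one_gt_d9
  have hpos : (0:ℝ) < Real.exp 1 := by linarith
  have hinv : 1 / Real.exp 1 < 0.37 := by
    rw [div_lt_iff₀ hpos]; nlinarith
  have hinv0 : 0 < 1 / Real.exp 1 := by positivity
  nlinarith [mul_nonneg (by linarith : (0:ℝ) ≤ 0.37 - 1/Real.exp 1) (by linarith : (0:ℝ) ≤ 1 - a - b - d)]
end
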